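/- Assume ‖A‖₂ < 1. Then ε_n → 0 as n → ∞, and there exists a strictly increasing sequence of indices n₁ < n₂ < … such that for every l, ε_{n_l} = ( ‖x^{n_l} − x^{n_l − 1}‖₂ + α^{n_l} )^{1/2} < ε_{n_l − 1}. Moreover, this subsequence admits a further subsequence {n_{l_r}} such that {x^{n_{l_r}}} converges in ℝ^N. -/

import Mathlib

open Finset Filter Matrix Topology

noncomputable def Ffun {M N : ℕ} (A : Matrix (Fin M) (Fin N) ℝ) (b : Fin M → ℝ)
    (lam q : Fin N → ℝ) (x : Fin N → ℝ) : ℝ :=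
  (∑ i, (A.mulVec x i - b i) ^ 2) + 2 * ∑ k, lam k * |x k| ^ (q k)

noncomputable def Gfun {M N : ℕ} (A : Matrix (Fin M) (Fin N) ℝ) (b : Fin M → ℝ)
    (lam q : Fin N → ℝ) (x a w : Fin N → ℝ) (ε : ℝ) : ℝ :=
  (∑ i, (A.mulVec x i - b i) ^ 2) - (∑ i, (A.mulVec (x - a) i) ^ 2)
    + (∑ k, (x k - a k) ^ 2)
    + ∑ k ∈ Finset.univ.filter (fun k => 1 ≤ q k ∧ q k < 2),
        lam k * (q k * w k * ((x k) ^ 2 + ε ^ 2)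
          + (2 - q k) * (w k) ^ (q k / (q k - 2)))
    + ∑ k ∈ Finset.univ.filter (fun k => q k = 2),
        2 * lam k * ((x k) ^ 2 + ε ^ 2) * ((w k) ^ 2 - 2 * w k + 2)

noncomputable def l2 {N : ℕ} (v : Fin N → ℝ) : ℝ :=
  Real.sqrt (∑ k, (v k) ^ 2)

noncomputable def specNorm {M N : ℕ} (A : Matrix (Fin M) (Fin N) ℝ) : ℝ :=
  ‖LinearMap.toContinuousLinearMap (Matrix.toEuclideanLin A)‖

lemma irls_sum_sq_sub {ι : Type*} (s : Finset ι) (f g : ι → ℝ) :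
    ∑ i ∈ s, (f i - g i)^2
      = (∑ i ∈ s, (f i)^2) - 2*(∑ i ∈ s, f i * g i) + ∑ i ∈ s, (g i)^2 := by
  rw [Finset.mul_sum, ← Finset.sum_sub_distrib, ← Finset.sum_add_distrib]
  exact Finset.sum_congr rfl fun i _ => by ring

lemma irls_dot {M N : ℕ} (A : Matrix (Fin M) (Fin N) ℝ) (u : Fin M → ℝ) (v : Fin N → ℝ) :
    ∑ i, A.mulVec v i * u i = ∑ k, v k * Aᵀ.mulVec u k := by
  unfold Matrix.mulVec dotProduct
  simp only [Matrix.transpose_apply, Finset.sum_mul, Finset.mul_sum]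
  rw [Finset.sum_comm]
  exact Finset.sum_congr rfl fun k _ => Finset.sum_congr rfl fun i _ => by ring

lemma irls_specnorm {M N : ℕ} (A : Matrix (Fin M) (Fin N) ℝ) (v : Fin N → ℝ) :
    ∑ i, (A.mulVec v i)^2 ≤ (specNorm A)^2 * ∑ k, (v k)^2 := by
  set u : EuclideanSpace ℝ (Fin N) := (WithLp.equiv 2 (Fin N → ℝ)).symm v
  have h1 : ‖LinearMap.toContinuousLinearMap (Matrix.toEuclideanLin A) u‖
      ≤ specNorm A * ‖u‖ := (LinearMap.toContinuousLinearMap (Matrix.toEuclideanLin A)).le_opNorm u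
  have h2 : (LinearMap.toContinuousLinearMap (Matrix.toEuclideanLin A)) u
      = (WithLp.equiv 2 (Fin M → ℝ)).symm (A.mulVec v) := by
    simp [u, Matrix.toEuclideanLin_apply_piLp_toLp]
  have hnorm1 : ‖(WithLp.equiv 2 (Fin M → ℝ)).symm (A.mulVec v)‖
      = Real.sqrt (∑ i, (A.mulVec v i)^2) := by
    rw [EuclideanSpace.norm_eq]
    congr 1
    exact Finset.sum_congr rfl fun i _ => by rw [Real.norm_eq_abs, sq_abs]; rfl
  have hnorm2 : ‖u‖ = Real.sqrt (∑ k, (v k)^2) := by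
    rw [EuclideanSpace.norm_eq]
    congr 1
    exact Finset.sum_congr rfl fun i _ => by rw [Real.norm_eq_abs, sq_abs]; rfl
  rw [h2, hnorm1, hnorm2] at h1
  have h0 : (0:ℝ) ≤ ∑ i, (A.mulVec v i)^2 := Finset.sum_nonneg fun i _ => sq_nonneg _
  have h0' : (0:ℝ) ≤ ∑ k, (v k)^2 := Finset.sum_nonneg fun i _ => sq_nonneg _
  calc ∑ i, (A.mulVec v i)^2 = Real.sqrt (∑ i, (A.mulVec v i)^2)^2 := (Real.sq_sqrt h0).symm
    _ ≤ (specNorm A * Real.sqrt (∑ k, (v k)^2))^2 := by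
        apply pow_le_pow_left₀ (Real.sqrt_nonneg _) h1
    _ = (specNorm A)^2 * ∑ k, (v k)^2 := by
        rw [mul_pow, Real.sq_sqrt h0']

lemma irls_bernoulli {p s t : ℝ} (hp0 : 0 < p) (hp1 : p ≤ 1) (hs : 0 < s) (ht : 0 ≤ t) :
    t ^ p ≤ s ^ p + p * s ^ (p - 1) * (t - s) := by
  have hu : -1 ≤ t / s - 1 := by
    have : 0 ≤ t / s := div_nonneg ht hs.le
    linarith
  have hb := rpow_one_add_le_one_add_mul_self hu hp0.le hp1
  have h1 : (1 : ℝ) + (t / s - 1) = t / s := by ring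
  rw [h1] at hb
  have hsp : (0:ℝ) < s ^ p := Real.rpow_pos_of_pos hs p
  have h2 : t ^ p = s ^ p * (t / s) ^ p := by
    rw [← Real.mul_rpow hs.le (div_nonneg ht hs.le), mul_div_cancel₀ _ hs.ne']
  have h3 : s ^ (p - 1) = s ^ p / s := Real.rpow_sub_one hs.ne' p
  calc t ^ p = s ^ p * (t / s) ^ p := h2
    _ ≤ s ^ p * (1 + p * (t / s - 1)) := by
        apply mul_le_mul_of_nonneg_left hb hsp.le
    _ = s ^ p + p * (s ^ p / s) * (t - s) := by field_simp
    _ = s ^ p + p * s ^ (p - 1) * (t - s) := by rw [h3]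

lemma irls_quad {c y a : ℝ} (hc : 0 < c) :
    c * (c⁻¹ * y)^2 - 2 * (c⁻¹ * y) * y ≤ c * a^2 - 2 * a * y := by
  have key : c * a^2 - 2*a*y - (c * (c⁻¹ * y)^2 - 2*(c⁻¹*y)*y) = c * (a - c⁻¹*y)^2 := by
    field_simp
    ring
  nlinarith [mul_nonneg hc.le (sq_nonneg (a - c⁻¹*y)), key]

lemma irls_step {M N : ℕ} (A : Matrix (Fin M) (Fin N) ℝ) (b : Fin M → ℝ)
    (lqw a xp : Fin N → ℝ) (hlqw : ∀ k, 0 ≤ lqw k)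
    (hxp : ∀ k, xp k = (1 + lqw k)⁻¹
      * (a k + Aᵀ.mulVec b k - Aᵀ.mulVec (A.mulVec a) k)) :
    (∑ i, (A.mulVec xp i - b i)^2) + (∑ k, (xp k - a k)^2)
      - (∑ i, (A.mulVec (xp - a) i)^2) + ∑ k, lqw k * (xp k)^2
    ≤ (∑ i, (A.mulVec a i - b i)^2) + ∑ k, lqw k * (a k)^2 := by
  set c : Fin N → ℝ := fun k => 1 + lqw k with hc
  set y : Fin N → ℝ := fun k => a k + Aᵀ.mulVec b k - Aᵀ.mulVec (A.mulVec a) k with hy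
  have hcpos : ∀ k, 0 < c k := fun k => by have := hlqw k; simp [hc]; linarith
  have expand : ∀ z : Fin N → ℝ,
      (∑ i, (A.mulVec z i - b i)^2) + (∑ k, (z k - a k)^2)
        - (∑ i, (A.mulVec (z - a) i)^2) + ∑ k, lqw k * (z k)^2
      = (∑ k, (c k * (z k)^2 - 2 * z k * y k))
        + ((∑ i, (b i)^2) - (∑ i, (A.mulVec a i)^2) + ∑ k, (a k)^2) := by
    intro z
    have h0 : ∑ i, (A.mulVec (z - a) i)^2 = ∑ i, (A.mulVec z i - A.mulVec a i)^2 := by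
      simp [Matrix.mulVec_sub]
    rw [h0, irls_sum_sq_sub univ (fun i => A.mulVec z i) b,
      irls_sum_sq_sub univ (fun i => A.mulVec z i) (fun i => A.mulVec a i),
      irls_sum_sq_sub univ z a,
      irls_dot A b z, irls_dot A (A.mulVec a) z]
    have hsum : ∑ k, (c k * (z k)^2 - 2 * z k * y k)
        = (∑ k, (z k)^2) + (∑ k, lqw k * (z k)^2) - 2*(∑ k, z k * a k)
          - 2*(∑ k, z k * Aᵀ.mulVec b k) + 2*(∑ k, z k * Aᵀ.mulVec (A.mulVec a) k) := by
      rw [Finset.mul_sum, Finset.mul_sum, Finset.mul_sum, ← Finset.sum_add_distrib,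
        ← Finset.sum_sub_distrib, ← Finset.sum_sub_distrib, ← Finset.sum_add_distrib]
      exact Finset.sum_congr rfl fun k _ => by simp only [hc, hy]; ring
    rw [hsum]
    ring
  have hle : ∑ k, (c k * (xp k)^2 - 2 * xp k * y k)
      ≤ ∑ k, (c k * (a k)^2 - 2 * a k * y k) := by
    apply Finset.sum_le_sum
    intro k _
    have := irls_quad (a := a k) (y := y k) (hcpos k)
    rw [hxp k]
    exact this
  have e1 := expand xp
  have e2 := expand a
  rw [e1]
  have e2' : (∑ i, (A.mulVec a i - b i)^2) + ∑ k, lqw k * (a k)^2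
      = (∑ k, (c k * (a k)^2 - 2 * a k * y k))
        + ((∑ i, (b i)^2) - (∑ i, (A.mulVec a i)^2) + ∑ k, (a k)^2) := by
    have h : (∑ i, (A.mulVec a i - b i)^2) + (∑ k, (a k - a k)^2)
        - (∑ i, (A.mulVec (a - a) i)^2) + ∑ k, lqw k * (a k)^2
      = (∑ i, (A.mulVec a i - b i)^2) + ∑ k, lqw k * (a k)^2 := by
      simp
    rw [← h, e2]
  rw [e2']
  linarith

theorem stmt_11 {M N : ℕ} (A : Matrix (Fin M) (Fin N) ℝ) (hA : specNorm A < 1)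
    (b : Fin M → ℝ) (lam q : Fin N → ℝ)
    (hlam : ∀ k, 0 < lam k) (hq : ∀ k, 1 ≤ q k ∧ q k ≤ 2)
    (x : ℕ → Fin N → ℝ) (eps : ℕ → ℝ) (w : ℕ → Fin N → ℝ)
    (α : ℝ) (hα0 : 0 < α) (hα1 : α < 1) (heps0 : 0 < eps 0)
    (hw : ∀ n k, w n k = ((x n k) ^ 2 + (eps n) ^ 2) ^ ((q k - 2) / 2))
    (hxiter : ∀ n k, x (n + 1) k =
      (1 + lam k * q k * w n k)⁻¹
        * (x n k + Aᵀ.mulVec b k - Aᵀ.mulVec (A.mulVec (x n)) k))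
    (hepsiter : ∀ n, eps (n + 1) =
      min (eps n) (Real.sqrt (l2 (x (n + 1) - x n) + α ^ (n + 1)))) :
    Tendsto eps atTop (nhds 0) ∧
    ∃ nl : ℕ → ℕ, StrictMono nl ∧ (∀ l, 1 ≤ nl l) ∧
      (∀ l, eps (nl l) = Real.sqrt (l2 (x (nl l) - x (nl l - 1)) + α ^ (nl l)) ∧
        eps (nl l) < eps (nl l - 1)) ∧
      ∃ (r : ℕ → ℕ) (xbar : Fin N → ℝ), StrictMono r ∧
        Tendsto (fun j => x (nl (r j))) atTop (nhds xbar) := by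
  have hσ0 : 0 ≤ specNorm A := norm_nonneg _
  have hγ : 0 < 1 - specNorm A ^ 2 := by nlinarith
  -- positivity of eps
  have hepspos : ∀ n, 0 < eps n := by
    intro n
    induction n with
    | zero => exact heps0
    | succ n ih =>
      rw [hepsiter n]
      refine lt_min ih (Real.sqrt_pos.mpr ?_)
      have h1 : 0 ≤ l2 (x (n+1) - x n) := Real.sqrt_nonneg _
      have h2 : 0 < α ^ (n+1) := pow_pos hα0 _
      linarith
  have hepsmono : ∀ n, eps (n+1) ≤ eps n := fun n => by
    rw [hepsiter n]; exact min_le_left _ _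
  have hwpos : ∀ n k, 0 < w n k := by
    intro n k
    rw [hw n k]
    have := hepspos n
    apply Real.rpow_pos_of_pos
    positivity
  set D : ℕ → ℝ := fun n => ∑ k, (x (n+1) k - x n k)^2 with hD
  set Φ : ℕ → ℝ := fun n => (∑ i, (A.mulVec (x n) i - b i)^2)
    + ∑ k, 2 * lam k * ((x n k)^2 + (eps n)^2) ^ (q k / 2) with hΦ
  have hDnonneg : ∀ n, 0 ≤ D n := fun n =>
    Finset.sum_nonneg fun k _ => sq_nonneg _
  have hΦnonneg : ∀ n, 0 ≤ Φ n := by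
    intro n
    apply add_nonneg (Finset.sum_nonneg fun i _ => sq_nonneg _)
    apply Finset.sum_nonneg
    intro k _
    have h1 := (hlam k).le
    have h2 : (0:ℝ) ≤ ((x n k)^2 + (eps n)^2) ^ (q k / 2) := by positivity
    positivity
  -- the key decrease estimate
  have hstep : ∀ n, Φ (n+1) + (1 - specNorm A ^ 2) * D n ≤ Φ n := by
    intro n
    have hlqw0 : ∀ k, 0 ≤ lam k * q k * w n k := fun k => by
      have h1 := (hlam k).le
      have h2 := (hq k).1
      have h3 := (hwpos n k).le
      exact mul_nonneg (mul_nonneg h1 (by linarith)) h3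
    have hI := irls_step A b (fun k => lam k * q k * w n k) (x n) (x (n+1))
      hlqw0 (fun k => hxiter n k)
    have hspec := irls_specnorm A (x (n+1) - x n)
    simp only [Pi.sub_apply] at hspec
    -- concavity inequality per coordinate
    have hconc : ∀ k, 2 * lam k * (((x (n+1) k)^2 + (eps n)^2) ^ (q k / 2))
        + lam k * q k * w n k * (x n k)^2
        ≤ 2 * lam k * (((x n k)^2 + (eps n)^2) ^ (q k / 2))
          + lam k * q k * w n k * (x (n+1) k)^2 := by
      intro k
      have hp0 : 0 < q k / 2 := by have := (hq k).1; linarith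
      have hp1 : q k / 2 ≤ 1 := by have := (hq k).2; linarith
      have hs : 0 < (x n k)^2 + (eps n)^2 := by have := hepspos n; positivity
      have ht : 0 ≤ (x (n+1) k)^2 + (eps n)^2 := by positivity
      have hber := irls_bernoulli hp0 hp1 hs ht
      have hwk : w n k = ((x n k)^2 + (eps n)^2) ^ (q k / 2 - 1) := by
        rw [hw n k]; congr 1; ring
      have h2 := mul_le_mul_of_nonneg_left hber
        (by have := (hlam k).le; positivity : (0:ℝ) ≤ 2 * lam k)
      rw [mul_add] at h2
      have heq : 2 * lam k * (q k / 2 * ((x n k)^2 + (eps n)^2) ^ (q k / 2 - 1)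
            * ((x (n+1) k)^2 + (eps n)^2 - ((x n k)^2 + (eps n)^2)))
          = lam k * q k * w n k * (x (n+1) k)^2 - lam k * q k * w n k * (x n k)^2 := by
        rw [hwk]; ring
      linarith
    have hconcsum := Finset.sum_le_sum (fun k (_ : k ∈ Finset.univ) => hconc k)
    rw [Finset.sum_add_distrib, Finset.sum_add_distrib] at hconcsum
    -- eps monotonicity in the penalty term
    have hepsterm : ∀ k, 2 * lam k * (((x (n+1) k)^2 + (eps (n+1))^2) ^ (q k / 2))
        ≤ 2 * lam k * (((x (n+1) k)^2 + (eps n)^2) ^ (q k / 2)) := by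
      intro k
      apply mul_le_mul_of_nonneg_left _ (by have := (hlam k).le; positivity)
      apply Real.rpow_le_rpow (by positivity)
      · have h1 : (eps (n+1))^2 ≤ (eps n)^2 :=
          pow_le_pow_left₀ (hepspos (n+1)).le (hepsmono n) 2
        linarith
      · have := (hq k).1; linarith
    have hepstermsum := Finset.sum_le_sum (fun k (_ : k ∈ Finset.univ) => hepsterm k)
    simp only [hΦ, hD]
    linarith
  -- Φ is bounded by Φ 0 and partial sums of D are bounded
  have hΦdec : ∀ n, Φ (n+1) ≤ Φ n := fun n => by
    have h1 := hstep n
    have h2 := mul_nonneg hγ.le (hDnonneg n)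
    linarith
  have hpartial : ∀ m, (1 - specNorm A ^ 2) * (∑ n ∈ Finset.range m, D n) + Φ m ≤ Φ 0 := by
    intro m
    induction m with
    | zero => simp
    | succ m ih =>
      rw [Finset.sum_range_succ, mul_add]
      have := hstep m
      linarith
  have hDsum : Summable D := by
    apply summable_of_sum_range_le hDnonneg (c := Φ 0 / (1 - specNorm A ^ 2))
    intro m
    rw [le_div_iff₀ hγ]
    have h1 := hpartial m
    have h2 := hΦnonneg m
    nlinarith [hγ]
  have hD0 : Tendsto D atTop (𝓝 0) := hDsum.tendsto_atTop_zero
  have hl2eq : ∀ n, l2 (x (n+1) - x n) = Real.sqrt (D n) := by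
    intro n
    unfold l2
    simp only [hD, Pi.sub_apply]
  have hl20 : Tendsto (fun n => l2 (x (n+1) - x n)) atTop (𝓝 0) := by
    have h := (Real.continuous_sqrt.tendsto 0).comp hD0
    rw [Real.sqrt_zero] at h
    exact h.congr fun n => (hl2eq n).symm
  have hαlim : Tendsto (fun n : ℕ => α ^ (n+1)) atTop (𝓝 0) :=
    (tendsto_pow_atTop_nhds_zero_of_lt_one hα0.le hα1).comp (tendsto_add_atTop_nat 1)
  have hsq0 : Tendsto (fun n => Real.sqrt (l2 (x (n+1) - x n) + α ^ (n+1))) atTop (𝓝 0) := by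
    have hadd := hl20.add hαlim
    rw [add_zero] at hadd
    have h := (Real.continuous_sqrt.tendsto 0).comp hadd
    rw [Real.sqrt_zero] at h
    exact h
  have hepslim : Tendsto eps atTop (𝓝 0) := by
    rw [← tendsto_add_atTop_iff_nat 1]
    apply tendsto_of_tendsto_of_tendsto_of_le_of_le tendsto_const_nhds hsq0
    · exact fun n => (hepspos (n+1)).le
    · intro n
      show eps (n+1) ≤ Real.sqrt (l2 (x (n + 1) - x n) + α ^ (n + 1))
      rw [hepsiter n]
      exact min_le_right _ _
  refine ⟨hepslim, ?_⟩
  -- infinitely many strict decreases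
  have hfreq : ∃ᶠ n in atTop, eps (n+1) < eps n := by
    by_contra hcon
    rw [Filter.not_frequently] at hcon
    obtain ⟨N₀, hN₀⟩ := Filter.eventually_atTop.mp hcon
    have hconst : ∀ n, N₀ ≤ n → eps n = eps N₀ := by
      intro n hn
      induction n, hn using Nat.le_induction with
      | base => rfl
      | succ n hn ih =>
        have h1 := hN₀ n hn
        push_neg at h1
        exact (le_antisymm (hepsmono n) h1).trans ih
    have heq : eps =ᶠ[atTop] fun _ => eps N₀ :=
      Filter.eventually_atTop.mpr ⟨N₀, fun n hn => hconst n hn⟩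
    have h2 : Tendsto eps atTop (𝓝 (eps N₀)) :=
      Tendsto.congr' heq.symm tendsto_const_nhds
    have h3 : eps N₀ = 0 := tendsto_nhds_unique h2 hepslim
    exact (hepspos N₀).ne' h3
  obtain ⟨φ, hφmono, hφ⟩ := Filter.extraction_of_frequently_atTop hfreq
  set nl : ℕ → ℕ := fun l => φ l + 1 with hnl
  have hnlmono : StrictMono nl := fun a b h => by
    simp only [hnl]
    exact Nat.add_lt_add_right (hφmono h) 1
  have hnl1 : ∀ l, 1 ≤ nl l := fun l => Nat.le_add_left 1 (φ l)
  have hnlsub : ∀ l, nl l - 1 = φ l := fun l => by simp [hnl]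
  have hmain : ∀ l, eps (nl l) = Real.sqrt (l2 (x (nl l) - x (nl l - 1)) + α ^ (nl l)) ∧
      eps (nl l) < eps (nl l - 1) := by
    intro l
    have hlt : eps (φ l + 1) < eps (φ l) := hφ l
    have hiter := hepsiter (φ l)
    rcases min_cases (eps (φ l)) (Real.sqrt (l2 (x (φ l + 1) - x (φ l)) + α ^ (φ l + 1))) with
      ⟨h1, h2⟩ | ⟨h1, h2⟩
    · rw [hiter, h1] at hlt
      exact absurd hlt (lt_irrefl _)
    · constructor
      · rw [hnlsub l]
        simp only [hnl]
        rw [hiter, h1]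
      · rw [hnlsub l]
        simp only [hnl]
        exact hlt
  refine ⟨nl, hnlmono, hnl1, hmain, ?_⟩
  -- boundedness and Bolzano–Weierstrass
  set C : Fin N → ℝ := fun k => max 1 (Φ 0 / (2 * lam k)) with hC
  set R : ℝ := ∑ k, C k with hR
  have hCpos : ∀ k, 0 ≤ C k := fun k => le_trans zero_le_one (le_max_left _ _)
  have hCR : ∀ k, C k ≤ R := fun k =>
    Finset.single_le_sum (fun k _ => hCpos k) (Finset.mem_univ k)
  have hRnonneg : 0 ≤ R := Finset.sum_nonneg fun k _ => hCpos k
  have hxC : ∀ n k, |x n k| ≤ C k := by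
    intro n k
    have hΦn : Φ n ≤ Φ 0 := by
      induction n with
      | zero => exact le_refl _
      | succ n ih => exact (hΦdec n).trans ih
    have hterm : 2 * lam k * (((x n k)^2 + (eps n)^2) ^ (q k / 2)) ≤ Φ 0 := by
      have h1 : 2 * lam k * (((x n k)^2 + (eps n)^2) ^ (q k / 2))
          ≤ ∑ j, 2 * lam j * (((x n j)^2 + (eps n)^2) ^ (q j / 2)) := by
        apply Finset.single_le_sum (f := fun j => 2 * lam j * (((x n j)^2 + (eps n)^2) ^ (q j / 2)))
          _ (Finset.mem_univ k)
        intro j _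
        have := (hlam j).le
        have h2 : (0:ℝ) ≤ ((x n j)^2 + (eps n)^2) ^ (q j / 2) := by positivity
        positivity
      have h2 : (0:ℝ) ≤ ∑ i, (A.mulVec (x n) i - b i)^2 :=
        Finset.sum_nonneg fun i _ => sq_nonneg _
      calc 2 * lam k * (((x n k)^2 + (eps n)^2) ^ (q k / 2))
          ≤ ∑ j, 2 * lam j * (((x n j)^2 + (eps n)^2) ^ (q j / 2)) := h1
        _ ≤ Φ n := by simp only [hΦ]; linarith
        _ ≤ Φ 0 := hΦn
    have hdiv : (((x n k)^2 + (eps n)^2) ^ (q k / 2)) ≤ Φ 0 / (2 * lam k) := by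
      rw [le_div_iff₀ (by have := hlam k; linarith)]
      linarith
    have habs : |x n k| ^ (q k) ≤ (((x n k)^2 + (eps n)^2) ^ (q k / 2)) := by
      have h1 : |x n k| ^ (q k) = ((x n k)^2) ^ (q k / 2) := by
        rw [show ((x n k)^2 : ℝ) = |x n k| ^ (2:ℕ) from (sq_abs _).symm,
          ← Real.rpow_natCast |x n k| 2, ← Real.rpow_mul (abs_nonneg _)]
        congr 1
        push_cast
        ring
      rw [h1]
      apply Real.rpow_le_rpow (by positivity)
      · have := hepspos n; nlinarith [sq_nonneg (eps n)]
      · have := (hq k).1; linarith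
    rcases le_or_gt (|x n k|) 1 with h | h
    · exact h.trans (le_max_left _ _)
    · have h1 : |x n k| ≤ |x n k| ^ (q k) := by
        nth_rewrite 1 [← Real.rpow_one (|x n k|)]
        exact Real.rpow_le_rpow_of_exponent_le h.le (hq k).1
      have : |x n k| ≤ Φ 0 / (2 * lam k) := h1.trans (habs.trans hdiv)
      exact this.trans (le_max_right _ _)
  have hball : ∀ l, x (nl l) ∈ Metric.closedBall (0 : Fin N → ℝ) R := by
    intro l
    rw [Metric.mem_closedBall, dist_zero_right]
    rw [pi_norm_le_iff_of_nonneg hRnonneg]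
    intro k
    rw [Real.norm_eq_abs]
    exact (hxC (nl l) k).trans (hCR k)
  obtain ⟨xbar, -, r, hrmono, hrconv⟩ :=
    tendsto_subseq_of_bounded Metric.isBounded_closedBall hball
  exact ⟨r, xbar, hrmono, hrconv⟩
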